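/- Let k ≥ 2 be an integer and let a_n⁺, a_n⁻ ∈ ℂ for n = 0,…,k−1. Set ψ = Σ_{n=0}^{k−1} (a_n⁺ e_{n,−(k−n)} + a_n⁻ e_{−(n+1),−(k−n)}) ∈ H. Then, as elements of H, H_{S¹,T} ψ (θ₁,θ₂) = ( a_{k−1}⁺ e^{−i(θ₁+θ₂)} e^{i(k−1)θ₁} + a_{k−1}⁻ e^{i(θ₁−θ₂)} e^{−ikθ₁} ) e^{−iθ₂} + ( e^{−iθ₁} + e^{i(θ₁+θ₂)} ) a₀⁺ e^{−ikθ₂} + ( e^{iθ₁} + e^{−i(θ₁−θ₂)} ) a₀⁻ e^{−iθ₁} e^{−ikθ₂} + 2cos(θ₁+θ₂) Σ_{n=1}^{k−2} a_n⁺ e^{inθ₁} e^{−i(k−n)θ₂} + 2cos(θ₁−θ₂) Σ_{n=1}^{k−2} a_n⁻ e^{−i(n+1)θ₁} e^{−i(k−n)θ₂} (for k = 2 the last two sums are empty). -/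
import Mathlib


noncomputable section

/-- Fourier coefficient model of `L²((ℝ/2πℤ)²)`: trigonometric polynomials and more
general elements are described by their coefficient families `c : ℤ×ℤ → ℂ`,
`c ↔ Σ c(n,m) e^{i(nθ₁+mθ₂)}`. -/
abbrev Coef := (ℤ × ℤ) → ℂ

/-- The projection `P¹_M` (restriction of the first Fourier index to `M`). -/
def proj1 (S : ℤ → Prop) [DecidablePred S] (c : Coef) : Coef := fun p =>
  if S p.1 then c p else 0

/-- The projection `P²_M` (restriction of the second Fourier index to `M`). -/
def proj2 (S : ℤ → Prop) [DecidablePred S] (c : Coef) : Coef := fun p =>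
  if S p.2 then c p else 0

/-- Multiplication by `e^{i(aθ₁+bθ₂)}`, i.e. the shift of Fourier coefficients. -/
def Emul (a b : ℤ) (c : Coef) : Coef := fun p => c (p.1 - a, p.2 - b)

/-- `A₀ = E_{1,1}P¹_{(−∞,−1]} + E_{−1,1}P¹_{[1,∞)}`. -/
def opA0 (c : Coef) : Coef :=
  Emul 1 1 (proj1 (fun n => n ≤ -1) c) + Emul (-1) 1 (proj1 (fun n => 1 ≤ n) c)

/-- `A₊ = E_{−1,−1}P¹_{(−∞,0]} + E_{−1,1}P¹_{[1,∞)} + E_{1,1}P¹_{(−∞,−1]} + E_{1,−1}P¹_{[0,∞)}`. -/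
def opAplus (c : Coef) : Coef :=
  Emul (-1) (-1) (proj1 (fun n => n ≤ 0) c) + Emul (-1) 1 (proj1 (fun n => 1 ≤ n) c)
    + Emul 1 1 (proj1 (fun n => n ≤ -1) c) + Emul 1 (-1) (proj1 (fun n => 0 ≤ n) c)

/-- `A₋₁ = E_{1,−1}P¹_{(−∞,−2]} + E_{1,0}P¹_{{−1}} + E_{−1,0}P¹_{{0}} + E_{−1,−1}P¹_{[1,∞)}`. -/
def opAm1 (c : Coef) : Coef :=
  Emul 1 (-1) (proj1 (fun n => n ≤ -2) c) + Emul 1 0 (proj1 (fun n => n = -1) c)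
    + Emul (-1) 0 (proj1 (fun n => n = 0) c) + Emul (-1) (-1) (proj1 (fun n => 1 ≤ n) c)

/-- `A₋ = E_{−1,1}P¹_{(−∞,−1]} + E_{−1,0}P¹_{{0}} + E_{−1,−1}P¹_{[1,∞)}
       + E_{1,−1}P¹_{(−∞,−2]} + E_{1,0}P¹_{{−1}} + E_{1,1}P¹_{[0,∞)}`. -/
def opAminus (c : Coef) : Coef :=
  Emul (-1) 1 (proj1 (fun n => n ≤ -1) c) + Emul (-1) 0 (proj1 (fun n => n = 0) c)
    + Emul (-1) (-1) (proj1 (fun n => 1 ≤ n) c) + Emul 1 (-1) (proj1 (fun n => n ≤ -2) c)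
    + Emul 1 0 (proj1 (fun n => n = -1) c) + Emul 1 1 (proj1 (fun n => 0 ≤ n) c)

/-- The tunneling operator
`H_{S¹,T} = A₀ P²_{{0}} + A₊ P²_{[1,∞)} + A₋₁ P²_{{−1}} + A₋ P²_{(−∞,−2]}`. -/
def tunnelS1 (c : Coef) : Coef :=
  opA0 (proj2 (fun m => m = 0) c) + opAplus (proj2 (fun m => 1 ≤ m) c)
    + opAm1 (proj2 (fun m => m = -1) c) + opAminus (proj2 (fun m => m ≤ -2) c)

/-- Fourier coefficient of the single exponential `e_{n,m}(θ₁,θ₂) = e^{i(nθ₁+mθ₂)}`. -/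
def cdelta (n m : ℤ) : Coef := fun p => if p = (n, m) then 1 else 0

/-- The trigonometric polynomial with coefficients `c`, as a function of `(θ₁, θ₂)`. -/
def realize (c : Coef) (θ₁ θ₂ : ℝ) : ℂ :=
  ∑ᶠ p : ℤ × ℤ, c p * Complex.exp (Complex.I * ((p.1 : ℂ) * (θ₁ : ℂ) + (p.2 : ℂ) * (θ₂ : ℂ)))



lemma proj1_add (S : ℤ → Prop) [DecidablePred S] (c d : Coef) :
    proj1 S (c + d) = proj1 S c + proj1 S d := by
  funext p; simp only [proj1, Pi.add_apply]; split <;> simp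

lemma proj2_add (S : ℤ → Prop) [DecidablePred S] (c d : Coef) :
    proj2 S (c + d) = proj2 S c + proj2 S d := by
  funext p; simp only [proj2, Pi.add_apply]; split <;> simp

lemma Emul_add (a b : ℤ) (c d : Coef) : Emul a b (c + d) = Emul a b c + Emul a b d := rfl

lemma proj1_smul (S : ℤ → Prop) [DecidablePred S] (x : ℂ) (c : Coef) :
    proj1 S (x • c) = x • proj1 S c := by
  funext p; simp only [proj1, Pi.smul_apply, smul_eq_mul]; split <;> simp

lemma proj2_smul (S : ℤ → Prop) [DecidablePred S] (x : ℂ) (c : Coef) :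
    proj2 S (x • c) = x • proj2 S c := by
  funext p; simp only [proj2, Pi.smul_apply, smul_eq_mul]; split <;> simp

lemma Emul_smul (a b : ℤ) (x : ℂ) (c : Coef) : Emul a b (x • c) = x • Emul a b c := rfl

lemma proj1_zero (S : ℤ → Prop) [DecidablePred S] : proj1 S (0 : Coef) = 0 := by
  funext p; simp [proj1]

lemma proj2_zero (S : ℤ → Prop) [DecidablePred S] : proj2 S (0 : Coef) = 0 := by
  funext p; simp [proj2]

lemma Emul_zero (a b : ℤ) : Emul a b (0 : Coef) = 0 := rfl

lemma collapse_ite (A B : Prop) [Decidable A] [Decidable B] :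
    (if A then (if B then (1:ℂ) else 0) else 0) = if A ∧ B then 1 else 0 := by
  split_ifs <;> simp_all

lemma proj2_cdelta (S : ℤ → Prop) [DecidablePred S] (n m : ℤ) :
    proj2 S (cdelta n m) = if S m then cdelta n m else 0 := by
  by_cases hS : S m
  · rw [if_pos hS]
    funext p; rcases p with ⟨x, y⟩
    simp only [proj2, cdelta, Prod.mk.injEq, collapse_ite]
    apply if_congr _ rfl rfl
    constructor
    · rintro ⟨-, h1, h2⟩; exact ⟨h1, h2⟩
    · rintro ⟨h1, h2⟩; exact ⟨h2 ▸ hS, h1, h2⟩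
  · rw [if_neg hS]
    funext p; rcases p with ⟨x, y⟩
    simp only [proj2, cdelta, Prod.mk.injEq, collapse_ite, Pi.zero_apply]
    rw [if_neg]
    rintro ⟨hSy, -, h2⟩; exact hS (h2 ▸ hSy)

lemma Emul_proj1_cdelta (S : ℤ → Prop) [DecidablePred S] (a b n m : ℤ) :
    Emul a b (proj1 S (cdelta n m)) = if S n then cdelta (n + a) (m + b) else 0 := by
  by_cases hS : S n
  · rw [if_pos hS]
    funext p; rcases p with ⟨x, y⟩
    simp only [Emul, proj1, cdelta, Prod.mk.injEq, collapse_ite]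
    apply if_congr _ rfl rfl
    constructor
    · rintro ⟨-, h1, h2⟩; omega
    · rintro ⟨h1, h2⟩
      have hx : x - a = n := by omega
      exact ⟨hx ▸ hS, hx, by omega⟩
  · rw [if_neg hS]
    funext p; rcases p with ⟨x, y⟩
    simp only [Emul, proj1, cdelta, Prod.mk.injEq, collapse_ite, Pi.zero_apply]
    rw [if_neg]
    rintro ⟨hSx, h1, -⟩; exact hS (h1 ▸ hSx)

lemma opA0_zero : opA0 0 = 0 := by
  simp [opA0, proj1_zero, Emul_zero]
lemma opAplus_zero : opAplus 0 = 0 := by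
  simp [opAplus, proj1_zero, Emul_zero]
lemma opAm1_zero : opAm1 0 = 0 := by
  simp [opAm1, proj1_zero, Emul_zero]
lemma opAminus_zero : opAminus 0 = 0 := by
  simp [opAminus, proj1_zero, Emul_zero]

lemma tunnelS1_add (c d : Coef) : tunnelS1 (c + d) = tunnelS1 c + tunnelS1 d := by
  simp only [tunnelS1, opA0, opAplus, opAm1, opAminus, proj2_add, proj1_add, Emul_add]
  abel

lemma tunnelS1_smul (x : ℂ) (c : Coef) : tunnelS1 (x • c) = x • tunnelS1 c := by
  simp only [tunnelS1, opA0, opAplus, opAm1, opAminus, proj2_smul, proj1_smul, Emul_smul,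
    smul_add]

lemma tunnelS1_zero : tunnelS1 (0 : Coef) = 0 := by
  simp [tunnelS1, proj2_zero, opA0_zero, opAplus_zero, opAm1_zero, opAminus_zero]

lemma tunnelS1_sum {ι : Type*} (s : Finset ι) (f : ι → Coef) :
    tunnelS1 (∑ i ∈ s, f i) = ∑ i ∈ s, tunnelS1 (f i) := by
  classical
  induction s using Finset.cons_induction with
  | empty => simpa using tunnelS1_zero
  | cons a s ha ih => rw [Finset.sum_cons, Finset.sum_cons, tunnelS1_add, ih]

lemma T_case1 {n m : ℤ} (hn : 1 ≤ n) (hm : m ≤ -2) :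
    tunnelS1 (cdelta n m) = cdelta (n - 1) (m - 1) + cdelta (n + 1) (m + 1) := by
  rw [tunnelS1]
  rw [proj2_cdelta, proj2_cdelta, proj2_cdelta, proj2_cdelta,
    if_neg (by omega : ¬ m = 0), if_neg (by omega : ¬ (1:ℤ) ≤ m),
    if_neg (by omega : ¬ m = -1), if_pos hm, opA0_zero, opAplus_zero, opAm1_zero]
  rw [opAminus, Emul_proj1_cdelta, Emul_proj1_cdelta, Emul_proj1_cdelta,
    Emul_proj1_cdelta, Emul_proj1_cdelta, Emul_proj1_cdelta,
    if_neg (by omega : ¬ n ≤ -1), if_neg (by omega : ¬ n = 0), if_pos hn,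
    if_neg (by omega : ¬ n ≤ -2), if_neg (by omega : ¬ n = -1),
    if_pos (by omega : (0:ℤ) ≤ n)]
  have e1 : n + -1 = n - 1 := by ring
  have e2 : m + -1 = m - 1 := by ring
  rw [e1, e2]
  abel

lemma T_case2 {m : ℤ} (hm : m ≤ -2) :
    tunnelS1 (cdelta 0 m) = cdelta (-1) m + cdelta 1 (m + 1) := by
  rw [tunnelS1]
  rw [proj2_cdelta, proj2_cdelta, proj2_cdelta, proj2_cdelta,
    if_neg (by omega : ¬ m = 0), if_neg (by omega : ¬ (1:ℤ) ≤ m),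
    if_neg (by omega : ¬ m = -1), if_pos hm, opA0_zero, opAplus_zero, opAm1_zero]
  rw [opAminus, Emul_proj1_cdelta, Emul_proj1_cdelta, Emul_proj1_cdelta,
    Emul_proj1_cdelta, Emul_proj1_cdelta, Emul_proj1_cdelta,
    if_neg (by omega : ¬ (0:ℤ) ≤ -1), if_pos rfl, if_neg (by omega : ¬ (1:ℤ) ≤ 0),
    if_neg (by omega : ¬ (0:ℤ) ≤ -2), if_neg (by omega : ¬ (0:ℤ) = -1),
    if_pos (le_refl (0:ℤ))]
  norm_num

lemma T_case3 {m : ℤ} (hm : m ≤ -2) :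
    tunnelS1 (cdelta (-1) m) = cdelta (-2) (m + 1) + cdelta 0 m := by
  rw [tunnelS1]
  rw [proj2_cdelta, proj2_cdelta, proj2_cdelta, proj2_cdelta,
    if_neg (by omega : ¬ m = 0), if_neg (by omega : ¬ (1:ℤ) ≤ m),
    if_neg (by omega : ¬ m = -1), if_pos hm, opA0_zero, opAplus_zero, opAm1_zero]
  rw [opAminus, Emul_proj1_cdelta, Emul_proj1_cdelta, Emul_proj1_cdelta,
    Emul_proj1_cdelta, Emul_proj1_cdelta, Emul_proj1_cdelta,
    if_pos (le_refl (-1:ℤ)), if_neg (by omega : ¬ (-1:ℤ) = 0),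
    if_neg (by omega : ¬ (1:ℤ) ≤ -1), if_neg (by omega : ¬ (-1:ℤ) ≤ -2),
    if_pos rfl, if_neg (by omega : ¬ (0:ℤ) ≤ -1)]
  norm_num

lemma T_case4 {n m : ℤ} (hn : n ≤ -2) (hm : m ≤ -2) :
    tunnelS1 (cdelta n m) = cdelta (n - 1) (m + 1) + cdelta (n + 1) (m - 1) := by
  rw [tunnelS1]
  rw [proj2_cdelta, proj2_cdelta, proj2_cdelta, proj2_cdelta,
    if_neg (by omega : ¬ m = 0), if_neg (by omega : ¬ (1:ℤ) ≤ m),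
    if_neg (by omega : ¬ m = -1), if_pos hm, opA0_zero, opAplus_zero, opAm1_zero]
  rw [opAminus, Emul_proj1_cdelta, Emul_proj1_cdelta, Emul_proj1_cdelta,
    Emul_proj1_cdelta, Emul_proj1_cdelta, Emul_proj1_cdelta,
    if_pos (by omega : n ≤ -1), if_neg (by omega : ¬ n = 0),
    if_neg (by omega : ¬ (1:ℤ) ≤ n), if_pos hn, if_neg (by omega : ¬ n = -1),
    if_neg (by omega : ¬ (0:ℤ) ≤ n)]
  have e1 : n + -1 = n - 1 := by ring
  have e2 : m + -1 = m - 1 := by ring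
  rw [e1, e2]
  abel

lemma T_case5 {n : ℤ} (hn : 1 ≤ n) :
    tunnelS1 (cdelta n (-1)) = cdelta (n - 1) (-2) := by
  rw [tunnelS1]
  rw [proj2_cdelta, proj2_cdelta, proj2_cdelta, proj2_cdelta,
    if_neg (by omega : ¬ (-1:ℤ) = 0), if_neg (by omega : ¬ (1:ℤ) ≤ -1),
    if_pos rfl, if_neg (by omega : ¬ (-1:ℤ) ≤ -2), opA0_zero, opAplus_zero, opAminus_zero]
  rw [opAm1, Emul_proj1_cdelta, Emul_proj1_cdelta, Emul_proj1_cdelta, Emul_proj1_cdelta,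
    if_neg (by omega : ¬ n ≤ -2), if_neg (by omega : ¬ n = -1),
    if_neg (by omega : ¬ n = 0), if_pos hn]
  have e1 : n + -1 = n - 1 := by ring
  have e2 : (-1 : ℤ) + -1 = -2 := by ring
  rw [e1, e2]
  abel

lemma T_case6 {n : ℤ} (hn : n ≤ -2) :
    tunnelS1 (cdelta n (-1)) = cdelta (n + 1) (-2) := by
  rw [tunnelS1]
  rw [proj2_cdelta, proj2_cdelta, proj2_cdelta, proj2_cdelta,
    if_neg (by omega : ¬ (-1:ℤ) = 0), if_neg (by omega : ¬ (1:ℤ) ≤ -1),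
    if_pos rfl, if_neg (by omega : ¬ (-1:ℤ) ≤ -2), opA0_zero, opAplus_zero, opAminus_zero]
  rw [opAm1, Emul_proj1_cdelta, Emul_proj1_cdelta, Emul_proj1_cdelta, Emul_proj1_cdelta,
    if_pos hn, if_neg (by omega : ¬ n = -1),
    if_neg (by omega : ¬ n = 0), if_neg (by omega : ¬ (1:ℤ) ≤ n)]
  have e2 : (-1 : ℤ) + -1 = -2 := by ring
  rw [e2]
  abel

lemma support_cdelta (n m : ℤ) : (Function.support (cdelta n m)).Finite := by
  apply Set.Finite.subset (Set.finite_singleton ((n, m) : ℤ × ℤ))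
  intro p hp
  simp only [Function.mem_support, cdelta] at hp
  by_contra h
  simp only [Set.mem_singleton_iff] at h
  exact hp (if_neg h)

lemma support_smul_coef (x : ℂ) (c : Coef) (hc : (Function.support c).Finite) :
    (Function.support (x • c)).Finite := by
  apply hc.subset
  intro p hp
  simp only [Function.mem_support, Pi.smul_apply, smul_eq_mul] at hp ⊢
  intro h; exact hp (by rw [h, mul_zero])

lemma support_add_coef (c d : Coef) (hc : (Function.support c).Finite)
    (hd : (Function.support d).Finite) : (Function.support (c + d)).Finite := by
  apply (hc.union hd).subset
  intro p hp
  by_contra h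
  simp only [Set.mem_union, Function.mem_support, not_or, not_not] at h
  simp only [Function.mem_support, Pi.add_apply, h.1, h.2, add_zero, ne_eq,
    not_true_eq_false] at hp

lemma support_sum_coef {ι : Type*} (s : Finset ι) (f : ι → Coef)
    (hf : ∀ i ∈ s, (Function.support (f i)).Finite) :
    (Function.support (∑ i ∈ s, f i)).Finite := by
  classical
  induction s using Finset.cons_induction with
  | empty => simp
  | cons a s ha ih =>
    rw [Finset.sum_cons]
    exact support_add_coef _ _ (hf a (Finset.mem_cons_self a s))
      (ih fun i hi => hf i (Finset.mem_cons_of_mem hi))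

lemma realize_zero (θ₁ θ₂ : ℝ) : realize (0 : Coef) θ₁ θ₂ = 0 := by
  simp [realize]

lemma realize_cdelta (n m : ℤ) (θ₁ θ₂ : ℝ) :
    realize (cdelta n m) θ₁ θ₂
      = Complex.exp (Complex.I * ((n : ℂ) * (θ₁ : ℂ) + (m : ℂ) * (θ₂ : ℂ))) := by
  rw [realize, finsum_eq_single _ ((n, m) : ℤ × ℤ)]
  · simp [cdelta]
  · intro p hp; simp [cdelta, hp]

lemma realize_add (c d : Coef) (hc : (Function.support c).Finite)
    (hd : (Function.support d).Finite) (θ₁ θ₂ : ℝ) :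
    realize (c + d) θ₁ θ₂ = realize c θ₁ θ₂ + realize d θ₁ θ₂ := by
  rw [realize, realize, realize]
  simp only [Pi.add_apply, add_mul]
  apply finsum_add_distrib
  · apply hc.subset
    intro p hp
    simp only [Function.mem_support] at hp ⊢
    intro h; exact hp (by rw [h, zero_mul])
  · apply hd.subset
    intro p hp
    simp only [Function.mem_support] at hp ⊢
    intro h; exact hp (by rw [h, zero_mul])

lemma realize_smul (x : ℂ) (c : Coef) (θ₁ θ₂ : ℝ) :
    realize (x • c) θ₁ θ₂ = x * realize c θ₁ θ₂ := by
  rw [realize, realize, ← smul_eq_mul, smul_finsum]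
  congr 1; funext p
  simp [mul_assoc]

lemma realize_sum {ι : Type*} (s : Finset ι) (f : ι → Coef)
    (hf : ∀ i ∈ s, (Function.support (f i)).Finite) (θ₁ θ₂ : ℝ) :
    realize (∑ i ∈ s, f i) θ₁ θ₂ = ∑ i ∈ s, realize (f i) θ₁ θ₂ := by
  classical
  induction s using Finset.cons_induction with
  | empty => simpa using realize_zero θ₁ θ₂
  | cons a s ha ih =>
    rw [Finset.sum_cons, Finset.sum_cons,
      realize_add _ _ (hf a (Finset.mem_cons_self a s))
        (support_sum_coef s f fun i hi => hf i (Finset.mem_cons_of_mem hi)),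
      ih fun i hi => hf i (Finset.mem_cons_of_mem hi)]

/-- action of `H_{S¹,T}` on the fiber `L_{2k−1}`. -/
theorem stmt13 (k : ℤ) (hk : 2 ≤ k) (ap am : ℤ → ℂ) (θ₁ θ₂ : ℝ) :
    realize (tunnelS1 (∑ n ∈ Finset.Icc (0 : ℤ) (k - 1),
        (ap n • cdelta n (n - k) + am n • cdelta (-(n + 1)) (n - k)))) θ₁ θ₂
      = (ap (k - 1) * Complex.exp (-(Complex.I * ((θ₁ : ℂ) + (θ₂ : ℂ))))
            * Complex.exp (Complex.I * (((k : ℂ) - 1) * (θ₁ : ℂ)))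
          + am (k - 1) * Complex.exp (Complex.I * ((θ₁ : ℂ) - (θ₂ : ℂ)))
            * Complex.exp (-(Complex.I * ((k : ℂ) * (θ₁ : ℂ)))))
          * Complex.exp (-(Complex.I * (θ₂ : ℂ)))
        + (Complex.exp (-(Complex.I * (θ₁ : ℂ)))
            + Complex.exp (Complex.I * ((θ₁ : ℂ) + (θ₂ : ℂ))))
            * ap 0 * Complex.exp (-(Complex.I * ((k : ℂ) * (θ₂ : ℂ))))
        + (Complex.exp (Complex.I * (θ₁ : ℂ))
            + Complex.exp (-(Complex.I * ((θ₁ : ℂ) - (θ₂ : ℂ)))))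
            * am 0 * Complex.exp (-(Complex.I * (θ₁ : ℂ)))
            * Complex.exp (-(Complex.I * ((k : ℂ) * (θ₂ : ℂ))))
        + 2 * Complex.cos ((θ₁ : ℂ) + (θ₂ : ℂ))
            * ∑ n ∈ Finset.Icc (1 : ℤ) (k - 2), ap n
                * Complex.exp (Complex.I * ((n : ℂ) * (θ₁ : ℂ)))
                * Complex.exp (-(Complex.I * (((k : ℂ) - (n : ℂ)) * (θ₂ : ℂ))))
        + 2 * Complex.cos ((θ₁ : ℂ) - (θ₂ : ℂ))
            * ∑ n ∈ Finset.Icc (1 : ℤ) (k - 2), am n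
                * Complex.exp (-(Complex.I * (((n : ℂ) + 1) * (θ₁ : ℂ))))
                * Complex.exp (-(Complex.I * (((k : ℂ) - (n : ℂ)) * (θ₂ : ℂ)))) := by
  classical
  set G : ℤ → Coef := fun n =>
    ap n • tunnelS1 (cdelta n (n - k)) + am n • tunnelS1 (cdelta (-(n + 1)) (n - k)) with hG
  have step1 : tunnelS1 (∑ n ∈ Finset.Icc (0 : ℤ) (k - 1),
      (ap n • cdelta n (n - k) + am n • cdelta (-(n + 1)) (n - k)))
      = ∑ n ∈ Finset.Icc (0 : ℤ) (k - 1), G n := by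
    rw [tunnelS1_sum]
    refine Finset.sum_congr rfl fun n _ => ?_
    rw [tunnelS1_add, tunnelS1_smul, tunnelS1_smul]
  rw [step1]
  have hsplit : Finset.Icc (0 : ℤ) (k - 1)
      = insert 0 (insert (k - 1) (Finset.Icc (1 : ℤ) (k - 2))) := by
    ext x; simp only [Finset.mem_Icc, Finset.mem_insert]; omega
  have h0ni : (0 : ℤ) ∉ insert (k - 1) (Finset.Icc (1 : ℤ) (k - 2)) := by
    simp only [Finset.mem_insert, Finset.mem_Icc]; omega
  have hkni : (k - 1 : ℤ) ∉ Finset.Icc (1 : ℤ) (k - 2) := by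
    simp only [Finset.mem_Icc]; omega
  rw [hsplit, Finset.sum_insert h0ni, Finset.sum_insert hkni]
  -- boundary terms
  have hG0 : G 0 = ap 0 • (cdelta (-1) (0 - k) + cdelta 1 (0 - k + 1))
      + am 0 • (cdelta (-2) (0 - k + 1) + cdelta 0 (0 - k)) := by
    rw [hG]
    simp only [neg_add, neg_zero, zero_add]
    rw [T_case2 (by omega), T_case3 (by omega)]
  have hGk : G (k - 1) = ap (k - 1) • cdelta (k - 2) (-2)
      + am (k - 1) • cdelta (-k + 1) (-2) := by
    simp only [hG]
    have e1 : k - 1 - k = -1 := by ring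
    have e2 : -(k - 1 + 1) = -k := by ring
    rw [e1, e2, T_case5 (by omega), T_case6 (by omega)]
    have e3 : k - 1 - 1 = k - 2 := by ring
    rw [e3]
  have hmid : ∀ n ∈ Finset.Icc (1 : ℤ) (k - 2),
      G n = ap n • (cdelta (n - 1) (n - k - 1) + cdelta (n + 1) (n - k + 1))
        + am n • (cdelta (-(n + 1) - 1) (n - k + 1) + cdelta (-(n + 1) + 1) (n - k - 1)) := by
    intro n hn
    rw [Finset.mem_Icc] at hn
    simp only [hG]
    rw [T_case1 (by omega) (by omega), T_case4 (by omega) (by omega)]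
  rw [hG0, hGk, Finset.sum_congr rfl hmid]
  -- support finiteness
  have fin1 : ∀ (x : ℂ) (a b c d : ℤ),
      (Function.support (x • (cdelta a b + cdelta c d))).Finite := fun x a b c d =>
    support_smul_coef _ _ (support_add_coef _ _ (support_cdelta _ _) (support_cdelta _ _))
  have fin2 : ∀ (x : ℂ) (a b : ℤ), (Function.support (x • cdelta a b)).Finite := fun x a b =>
    support_smul_coef _ _ (support_cdelta _ _)
  -- realize
  rw [realize_add _ _ (support_add_coef _ _ (fin1 _ _ _ _ _) (fin1 _ _ _ _ _))
      (support_add_coef _ _ (support_add_coef _ _ (fin2 _ _ _) (fin2 _ _ _))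
        (support_sum_coef _ _ fun i _ => support_add_coef _ _ (fin1 _ _ _ _ _) (fin1 _ _ _ _ _))),
    realize_add _ _ (support_add_coef _ _ (fin2 _ _ _) (fin2 _ _ _))
      (support_sum_coef _ _ fun i _ => support_add_coef _ _ (fin1 _ _ _ _ _) (fin1 _ _ _ _ _)),
    realize_add _ _ (fin1 _ _ _ _ _) (fin1 _ _ _ _ _),
    realize_add _ _ (fin2 _ _ _) (fin2 _ _ _),
    realize_sum _ _ (fun i _ => support_add_coef _ _ (fin1 _ _ _ _ _) (fin1 _ _ _ _ _))]
  simp only [realize_smul, realize_add _ _ (support_cdelta _ _) (support_cdelta _ _),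
    realize_cdelta]
  have hterm : ∀ (x y : ℂ) (a b c d e f g h : ℤ),
      realize (x • (cdelta a b + cdelta c d) + y • (cdelta e f + cdelta g h)) θ₁ θ₂
        = x * (Complex.exp (Complex.I * ((a : ℂ) * θ₁ + (b : ℂ) * θ₂))
              + Complex.exp (Complex.I * ((c : ℂ) * θ₁ + (d : ℂ) * θ₂)))
          + y * (Complex.exp (Complex.I * ((e : ℂ) * θ₁ + (f : ℂ) * θ₂))
              + Complex.exp (Complex.I * ((g : ℂ) * θ₁ + (h : ℂ) * θ₂))) := by
    intro x y a b c d e f g h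
    rw [realize_add _ _ (fin1 _ _ _ _ _) (fin1 _ _ _ _ _), realize_smul, realize_smul,
      realize_add _ _ (support_cdelta _ _) (support_cdelta _ _),
      realize_add _ _ (support_cdelta _ _) (support_cdelta _ _),
      realize_cdelta, realize_cdelta, realize_cdelta, realize_cdelta]
  simp only [hterm]
  rw [Finset.sum_add_distrib, Complex.two_cos, Complex.two_cos,
    Finset.mul_sum, Finset.mul_sum]
  have hsumA : ∀ n ∈ Finset.Icc (1:ℤ) (k-2),
      (Complex.exp ((↑θ₁ + ↑θ₂) * Complex.I) + Complex.exp (-(↑θ₁ + ↑θ₂) * Complex.I)) *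
        (ap n * Complex.exp (Complex.I * ((n:ℂ) * θ₁)) *
          Complex.exp (-(Complex.I * (((k:ℂ) - (n:ℂ)) * θ₂))))
      = ap n * (Complex.exp (Complex.I * ((↑(n-1):ℂ) * θ₁ + (↑(n-k-1):ℂ) * θ₂))
          + Complex.exp (Complex.I * ((↑(n+1):ℂ) * θ₁ + (↑(n-k+1):ℂ) * θ₂))) := by
    intro n _
    have g1 : Complex.exp (Complex.I * ((↑(n-1):ℂ) * θ₁ + (↑(n-k-1):ℂ) * θ₂))
        = Complex.exp (-(↑θ₁ + ↑θ₂) * Complex.I)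
          * (Complex.exp (Complex.I * ((n:ℂ) * θ₁))
            * Complex.exp (-(Complex.I * (((k:ℂ) - (n:ℂ)) * θ₂)))) := by
      rw [← Complex.exp_add, ← Complex.exp_add]; congr 1; push_cast; ring
    have g2 : Complex.exp (Complex.I * ((↑(n+1):ℂ) * θ₁ + (↑(n-k+1):ℂ) * θ₂))
        = Complex.exp ((↑θ₁ + ↑θ₂) * Complex.I)
          * (Complex.exp (Complex.I * ((n:ℂ) * θ₁))
            * Complex.exp (-(Complex.I * (((k:ℂ) - (n:ℂ)) * θ₂)))) := by
      rw [← Complex.exp_add, ← Complex.exp_add]; congr 1; push_cast; ring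
    linear_combination (-(ap n)) * g1 + (-(ap n)) * g2
  have hsumB : ∀ n ∈ Finset.Icc (1:ℤ) (k-2),
      (Complex.exp ((↑θ₁ - ↑θ₂) * Complex.I) + Complex.exp (-(↑θ₁ - ↑θ₂) * Complex.I)) *
        (am n * Complex.exp (-(Complex.I * (((n:ℂ) + 1) * θ₁))) *
          Complex.exp (-(Complex.I * (((k:ℂ) - (n:ℂ)) * θ₂))))
      = am n * (Complex.exp (Complex.I * ((↑(-(n+1)-1):ℂ) * θ₁ + (↑(n-k+1):ℂ) * θ₂))
          + Complex.exp (Complex.I * ((↑(-(n+1)+1):ℂ) * θ₁ + (↑(n-k-1):ℂ) * θ₂))) := by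
    intro n _
    have g1 : Complex.exp (Complex.I * ((↑(-(n+1)-1):ℂ) * θ₁ + (↑(n-k+1):ℂ) * θ₂))
        = Complex.exp (-(↑θ₁ - ↑θ₂) * Complex.I)
          * (Complex.exp (-(Complex.I * (((n:ℂ) + 1) * θ₁)))
            * Complex.exp (-(Complex.I * (((k:ℂ) - (n:ℂ)) * θ₂)))) := by
      rw [← Complex.exp_add, ← Complex.exp_add]; congr 1; push_cast; ring
    have g2 : Complex.exp (Complex.I * ((↑(-(n+1)+1):ℂ) * θ₁ + (↑(n-k-1):ℂ) * θ₂))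
        = Complex.exp ((↑θ₁ - ↑θ₂) * Complex.I)
          * (Complex.exp (-(Complex.I * (((n:ℂ) + 1) * θ₁)))
            * Complex.exp (-(Complex.I * (((k:ℂ) - (n:ℂ)) * θ₂)))) := by
      rw [← Complex.exp_add, ← Complex.exp_add]; congr 1; push_cast; ring
    linear_combination (-(am n)) * g1 + (-(am n)) * g2
  rw [Finset.sum_congr rfl hsumA, Finset.sum_congr rfl hsumB]
  have b1 : Complex.exp (Complex.I * ((↑(k-2):ℂ) * θ₁ + (↑(-2:ℤ):ℂ) * θ₂))
      = Complex.exp (-(Complex.I * ((θ₁:ℂ) + θ₂))) * Complex.exp (Complex.I * (((k:ℂ) - 1) * θ₁))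
        * Complex.exp (-(Complex.I * (θ₂:ℂ))) := by
    rw [← Complex.exp_add, ← Complex.exp_add]; congr 1; push_cast; ring
  have b2 : Complex.exp (Complex.I * ((↑(-k+1):ℂ) * θ₁ + (↑(-2:ℤ):ℂ) * θ₂))
      = Complex.exp (Complex.I * ((θ₁:ℂ) - θ₂)) * Complex.exp (-(Complex.I * ((k:ℂ) * θ₁)))
        * Complex.exp (-(Complex.I * (θ₂:ℂ))) := by
    rw [← Complex.exp_add, ← Complex.exp_add]; congr 1; push_cast; ring
  have b3 : Complex.exp (Complex.I * ((↑(-1:ℤ):ℂ) * θ₁ + (↑(0-k):ℂ) * θ₂))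
      = Complex.exp (-(Complex.I * (θ₁:ℂ))) * Complex.exp (-(Complex.I * ((k:ℂ) * θ₂))) := by
    rw [← Complex.exp_add]; congr 1; push_cast; ring
  have b4 : Complex.exp (Complex.I * ((↑(1:ℤ):ℂ) * θ₁ + (↑(0-k+1):ℂ) * θ₂))
      = Complex.exp (Complex.I * ((θ₁:ℂ) + θ₂)) * Complex.exp (-(Complex.I * ((k:ℂ) * θ₂))) := by
    rw [← Complex.exp_add]; congr 1; push_cast; ring
  have b5 : Complex.exp (Complex.I * ((↑(0:ℤ):ℂ) * θ₁ + (↑(0-k):ℂ) * θ₂))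
      = Complex.exp (Complex.I * (θ₁:ℂ)) * Complex.exp (-(Complex.I * (θ₁:ℂ)))
        * Complex.exp (-(Complex.I * ((k:ℂ) * θ₂))) := by
    rw [← Complex.exp_add, ← Complex.exp_add]; congr 1; push_cast; ring
  have b6 : Complex.exp (Complex.I * ((↑(-2:ℤ):ℂ) * θ₁ + (↑(0-k+1):ℂ) * θ₂))
      = Complex.exp (-(Complex.I * ((θ₁:ℂ) - θ₂))) * Complex.exp (-(Complex.I * (θ₁:ℂ)))
        * Complex.exp (-(Complex.I * ((k:ℂ) * θ₂))) := by
    rw [← Complex.exp_add, ← Complex.exp_add]; congr 1; push_cast; ring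
  linear_combination ap 0 * b3 + ap 0 * b4 + am 0 * b5 + am 0 * b6
    + ap (k-1) * b1 + am (k-1) * b2
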